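/- Let (x*, x) be a primitive pair in Z^3 (i.e. x* ∧ x is a primitive integer point), let H = ||x* ∧ x||, and let u = H^{-1}(x* ∧ x). Then there exists y in Z^3 with det(x*, x, y) = 1 such that y = r x* + s x + H^{-1} u with r, s real and |s| ≤ 1/2, and for any real Y ≥ 2(||x*|| + ||x||), y can moreover be chosen (adding a suitable integer multiple of x*) with Y ≤ ||y|| ≤ 2Y. -/
import Mathlib


noncomputable section

/-- Cross product in ℝ³. -/
def cross3 (x y : Fin 3 → ℝ) : Fin 3 → ℝ :=
  ![x 1 * y 2 - x 2 * y 1, x 2 * y 0 - x 0 * y 2, x 0 * y 1 - x 1 * y 0]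

/-- Scalar product in ℝ³. -/
def dot3 (x y : Fin 3 → ℝ) : ℝ := x 0 * y 0 + x 1 * y 1 + x 2 * y 2

/-- Euclidean norm in ℝ³. -/
def nrm (x : Fin 3 → ℝ) : ℝ := Real.sqrt (dot3 x x)

/-- Projective distance between nonzero vectors of ℝ³. -/
def pdist (x y : Fin 3 → ℝ) : ℝ := nrm (cross3 x y) / (nrm x * nrm y)

/-- The canonical map ℤ³ → ℝ³. -/
def toR (x : Fin 3 → ℤ) : Fin 3 → ℝ := fun i => (x i : ℝ)

/-- Determinant of three vectors of ℝ³. -/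
def det3 (a b c : Fin 3 → ℝ) : ℝ :=
  a 0 * (b 1 * c 2 - b 2 * c 1) - a 1 * (b 0 * c 2 - b 2 * c 0) + a 2 * (b 0 * c 1 - b 1 * c 0)

/-- Determinant of three vectors of ℤ³. -/
def det3Z (a b c : Fin 3 → ℤ) : ℤ :=
  a 0 * (b 1 * c 2 - b 2 * c 1) - a 1 * (b 0 * c 2 - b 2 * c 0) + a 2 * (b 0 * c 1 - b 1 * c 0)

/-- Cross product of integer vectors. -/
def crossZ (x y : Fin 3 → ℤ) : Fin 3 → ℤ :=
  ![x 1 * y 2 - x 2 * y 1, x 2 * y 0 - x 0 * y 2, x 0 * y 1 - x 1 * y 0]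

/-- A point of ℤ³ is primitive if its coordinates are coprime (in particular it is nonzero). -/
def IsPrimitive (x : Fin 3 → ℤ) : Prop := Int.gcd (Int.gcd (x 0) (x 1)) (x 2) = 1

/-- A pair of points of ℤ³ is primitive if their cross product is a primitive point. -/
def PrimPair (x y : Fin 3 → ℤ) : Prop := IsPrimitive (crossZ x y)

/-- The golden ratio. -/
def γ : ℝ := (1 + Real.sqrt 5) / 2

namespace Stmt7Aux

/-- Integer dot product. -/
def dZ (u v : Fin 3 → ℤ) : ℤ := u 0 * v 0 + u 1 * v 1 + u 2 * v 2

lemma det_eq_dot (a b c : Fin 3 → ℤ) : det3Z a b c = dZ (crossZ a b) c := by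
  simp [det3Z, dZ, crossZ]; ring

lemma dot_cross_left (a b : Fin 3 → ℤ) : dZ (crossZ a b) a = 0 := by
  simp [dZ, crossZ]; ring

lemma dot_cross_right (a b : Fin 3 → ℤ) : dZ (crossZ a b) b = 0 := by
  simp [dZ, crossZ]; ring

lemma lagrange (a b : Fin 3 → ℤ) :
    dZ a a * dZ b b - dZ a b * dZ b a = dZ (crossZ a b) (crossZ a b) := by
  simp [dZ, crossZ]; ring

lemma decompZ (a b y : Fin 3 → ℤ) (i : Fin 3) :
    dZ (crossZ a b) (crossZ a b) * y i = dZ (crossZ a b) y * crossZ a b i +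
      (dZ y b * dZ a a - dZ y a * dZ a b) * b i +
      (dZ y a * dZ b b - dZ y b * dZ a b) * a i := by
  fin_cases i <;> simp [dZ, crossZ] <;> ring

lemma dZ_add_smul (u w v : Fin 3 → ℤ) (k : ℤ) :
    dZ (u + k • w) v = dZ u v + k * dZ w v := by
  simp [dZ]; ring

lemma toR_apply (v : Fin 3 → ℤ) (i : Fin 3) : toR v i = (v i : ℝ) := rfl

lemma dZ_add_smul_right (v u w : Fin 3 → ℤ) (k : ℤ) :
    dZ v (u + k • w) = dZ v u + k * dZ v w := by
  simp [dZ]; ring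

lemma dZ_comm (u v : Fin 3 → ℤ) : dZ u v = dZ v u := by simp [dZ]; ring

lemma cross3_toR (a b : Fin 3 → ℤ) : cross3 (toR a) (toR b) = toR (crossZ a b) := by
  funext i; fin_cases i <;> simp [cross3, crossZ, toR]

lemma dot3_toR (u v : Fin 3 → ℤ) : dot3 (toR u) (toR v) = (dZ u v : ℝ) := by
  simp [dot3, dZ, toR]

lemma toR_add_zsmul (a b : Fin 3 → ℤ) (k : ℤ) :
    toR (a + k • b) = toR a + (k : ℝ) • toR b := by
  funext i
  simp only [toR, Pi.add_apply, Pi.smul_apply, smul_eq_mul]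
  push_cast; ring

lemma dot3_self_nonneg (v : Fin 3 → ℝ) : 0 ≤ dot3 v v := by
  simp only [dot3]
  nlinarith [mul_self_nonneg (v 0), mul_self_nonneg (v 1), mul_self_nonneg (v 2)]

lemma nrm_eq_norm (v : Fin 3 → ℝ) : nrm v = ‖(WithLp.equiv 2 (Fin 3 → ℝ)).symm v‖ := by
  rw [EuclideanSpace.norm_eq]
  simp [nrm, dot3, Fin.sum_univ_three, Real.norm_eq_abs, sq_abs, sq]

lemma nrm_nonneg (v : Fin 3 → ℝ) : 0 ≤ nrm v := Real.sqrt_nonneg _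

lemma nrm_add_le (u v : Fin 3 → ℝ) : nrm (u + v) ≤ nrm u + nrm v := by
  simp only [nrm_eq_norm]
  have h : (WithLp.equiv 2 (Fin 3 → ℝ)).symm (u + v) =
      (WithLp.equiv 2 (Fin 3 → ℝ)).symm u + (WithLp.equiv 2 (Fin 3 → ℝ)).symm v := rfl
  rw [h]; exact norm_add_le _ _

lemma nrm_smul (c : ℝ) (v : Fin 3 → ℝ) : nrm (c • v) = |c| * nrm v := by
  simp only [nrm_eq_norm]
  have h : (WithLp.equiv 2 (Fin 3 → ℝ)).symm (c • v) =
      c • (WithLp.equiv 2 (Fin 3 → ℝ)).symm v := rfl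
  rw [h, norm_smul, Real.norm_eq_abs]

lemma nrm_sub_le (u v : Fin 3 → ℝ) : nrm u - nrm v ≤ nrm (u + v) := by
  have h := nrm_add_le (u + v) ((-1 : ℝ) • v)
  have h2 : nrm ((-1 : ℝ) • v) = nrm v := by rw [nrm_smul]; simp
  have h3 : u + v + (-1 : ℝ) • v = u := by funext i; simp
  rw [h3, h2] at h; linarith

lemma dot3_eq_sum (u v : Fin 3 → ℝ) : dot3 u v = ∑ j, u j * v j := by
  rw [Fin.sum_univ_three]; rfl

lemma one_le_nrm_toR (v : Fin 3 → ℤ) (hv : v ≠ 0) : 1 ≤ nrm (toR v) := by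
  obtain ⟨i, hi⟩ : ∃ i, v i ≠ 0 := by
    by_contra h; push_neg at h; exact hv (funext h)
  have h1 : (1 : ℝ) ≤ (v i : ℝ) * (v i : ℝ) := by
    have : (1:ℤ) ≤ v i * v i := by rcases lt_or_gt_of_ne hi with h | h <;> nlinarith
    exact_mod_cast this
  have h2 : (1 : ℝ) ≤ dot3 (toR v) (toR v) := by
    rw [dot3_eq_sum]
    calc (1:ℝ) ≤ (toR v i) * (toR v i) := h1
    _ ≤ _ := Finset.single_le_sum (f := fun j => toR v j * toR v j)
        (fun j _ => mul_self_nonneg _) (Finset.mem_univ i)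
  rw [nrm]
  calc (1:ℝ) = Real.sqrt 1 := by simp
  _ ≤ _ := Real.sqrt_le_sqrt h2

end Stmt7Aux

open Stmt7Aux in
/-- Decomposition of any `y` with `n · y = 1`. -/
lemma decomp_real (xs x y : Fin 3 → ℤ) (hn0 : crossZ xs x ≠ 0)
    (hy : dZ (crossZ xs x) y = 1) :
    toR y = ((dZ y xs * dZ x x - dZ y x * dZ xs x : ℤ) / (dZ (crossZ xs x) (crossZ xs x) : ℝ)) • toR xs +
      ((dZ y x * dZ xs xs - dZ y xs * dZ xs x : ℤ) / (dZ (crossZ xs x) (crossZ xs x) : ℝ)) • toR x +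
      (nrm (cross3 (toR xs) (toR x)))⁻¹ •
        ((nrm (cross3 (toR xs) (toR x)))⁻¹ • cross3 (toR xs) (toR x)) := by
  have hc := cross3_toR xs x
  have hH1 : 1 ≤ nrm (cross3 (toR xs) (toR x)) := by
    rw [hc]; exact one_le_nrm_toR _ hn0
  have hH2 : nrm (cross3 (toR xs) (toR x)) * nrm (cross3 (toR xs) (toR x))
      = ((dZ (crossZ xs x) (crossZ xs x) : ℤ) : ℝ) := by
    rw [hc, nrm, Real.mul_self_sqrt (dot3_self_nonneg _), dot3_toR]
  have hHne : nrm (cross3 (toR xs) (toR x)) ≠ 0 := by positivity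
  have hNN : ((dZ (crossZ xs x) (crossZ xs x) : ℤ) : ℝ) ≠ 0 := by
    rw [← hH2]; positivity
  funext i
  have hiZ := decompZ xs x y i
  rw [hy, one_mul] at hiZ
  have hiR : ((dZ (crossZ xs x) (crossZ xs x) : ℤ) : ℝ) * (y i : ℝ)
      = ((crossZ xs x i : ℤ) : ℝ)
        + ((dZ y x * dZ xs xs - dZ y xs * dZ xs x : ℤ) : ℝ) * (x i : ℝ)
        + ((dZ y xs * dZ x x - dZ y x * dZ xs x : ℤ) : ℝ) * (xs i : ℝ) := by
    exact_mod_cast hiZ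
  have hinv : (nrm (toR (crossZ xs x)))⁻¹ * (nrm (toR (crossZ xs x)))⁻¹
      = (((dZ (crossZ xs x) (crossZ xs x) : ℤ) : ℝ))⁻¹ := by
    rw [← mul_inv, ← hc, hH2]
  rw [hc]
  show toR y i = _
  simp only [Pi.add_apply, Pi.smul_apply, smul_eq_mul, toR_apply]
  rw [← mul_assoc, hinv]
  field_simp
  push_cast at hiR ⊢
  linear_combination hiR

open Stmt7Aux in
/-- First step of the recursive construction: choice of the point `y`. -/
theorem stmt7 (xs x : Fin 3 → ℤ) (hprim : PrimPair xs x) :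
    (∃ (y : Fin 3 → ℤ) (r s : ℝ), det3Z xs x y = 1 ∧
      toR y = r • toR xs + s • toR x +
        (nrm (cross3 (toR xs) (toR x)))⁻¹ •
          ((nrm (cross3 (toR xs) (toR x)))⁻¹ • cross3 (toR xs) (toR x)) ∧
      |s| ≤ 1 / 2) ∧
    ∀ Y : ℝ, 2 * (nrm (toR xs) + nrm (toR x)) ≤ Y →
      ∃ (y : Fin 3 → ℤ) (r s : ℝ), det3Z xs x y = 1 ∧
        toR y = r • toR xs + s • toR x +
          (nrm (cross3 (toR xs) (toR x)))⁻¹ •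
            ((nrm (cross3 (toR xs) (toR x)))⁻¹ • cross3 (toR xs) (toR x)) ∧
        |s| ≤ 1 / 2 ∧ Y ≤ nrm (toR y) ∧ nrm (toR y) ≤ 2 * Y := by
  classical
  have hgcd : Int.gcd (Int.gcd (crossZ xs x 0) (crossZ xs x 1)) (crossZ xs x 2) = 1 := hprim
  have hn0 : crossZ xs x ≠ 0 := by
    intro h
    rw [h] at hgcd
    simp [Int.gcd] at hgcd
  -- Bezout point
  obtain ⟨y0, hy0⟩ : ∃ y0 : Fin 3 → ℤ, dZ (crossZ xs x) y0 = 1 := by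
    refine ⟨![Int.gcdA (crossZ xs x 0) (crossZ xs x 1) *
        Int.gcdA (Int.gcd (crossZ xs x 0) (crossZ xs x 1)) (crossZ xs x 2),
      Int.gcdB (crossZ xs x 0) (crossZ xs x 1) *
        Int.gcdA (Int.gcd (crossZ xs x 0) (crossZ xs x 1)) (crossZ xs x 2),
      Int.gcdB (Int.gcd (crossZ xs x 0) (crossZ xs x 1)) (crossZ xs x 2)], ?_⟩
    have h1 := Int.gcd_eq_gcd_ab (crossZ xs x 0) (crossZ xs x 1)
    have h2 := Int.gcd_eq_gcd_ab ((Int.gcd (crossZ xs x 0) (crossZ xs x 1) : ℤ)) (crossZ xs x 2)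
    rw [hgcd] at h2
    push_cast at h2
    simp only [dZ, Matrix.cons_val_zero, Matrix.cons_val_one, Matrix.head_cons,
      Matrix.cons_val_two, Matrix.tail_cons]
    linear_combination (-(Int.gcdA ((Int.gcd (crossZ xs x 0) (crossZ xs x 1) : ℤ)) (crossZ xs x 2))) * h1 - h2
  -- basic real facts
  have hc := cross3_toR xs x
  set H := nrm (cross3 (toR xs) (toR x)) with hHdef
  have hH1 : 1 ≤ H := by rw [hHdef, hc]; exact one_le_nrm_toR _ hn0
  have hNNpos : (0:ℝ) < ((dZ (crossZ xs x) (crossZ xs x) : ℤ) : ℝ) := by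
    have hH2 : H * H = ((dZ (crossZ xs x) (crossZ xs x) : ℤ) : ℝ) := by
      rw [hHdef, hc, nrm, Real.mul_self_sqrt (dot3_self_nonneg _), dot3_toR]
    nlinarith
  have hNN : ((dZ (crossZ xs x) (crossZ xs x) : ℤ) : ℝ) ≠ 0 := ne_of_gt hNNpos
  have hdet : ∀ y : Fin 3 → ℤ, dZ (crossZ xs x) y = 1 → det3Z xs x y = 1 := by
    intro y hy; rw [det_eq_dot, hy]
  -- shift identities
  have hdZ_shift_x : ∀ (y : Fin 3 → ℤ) (b : ℤ), dZ (crossZ xs x) (y + b • x) = dZ (crossZ xs x) y := by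
    intro y b; rw [dZ_add_smul_right, dot_cross_right, mul_zero, add_zero]
  have hdZ_shift_xs : ∀ (y : Fin 3 → ℤ) (k : ℤ), dZ (crossZ xs x) (y + k • xs) = dZ (crossZ xs x) y := by
    intro y k; rw [dZ_add_smul_right, dot_cross_left, mul_zero, add_zero]
  have hSnum_shift_x : ∀ (y : Fin 3 → ℤ) (b : ℤ),
      dZ (y + b • x) x * dZ xs xs - dZ (y + b • x) xs * dZ xs x
        = (dZ y x * dZ xs xs - dZ y xs * dZ xs x) + b * dZ (crossZ xs x) (crossZ xs x) := by
    intro y b; simp only [dZ_add_smul]; linear_combination b * lagrange xs x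
  have hSnum_shift_xs : ∀ (y : Fin 3 → ℤ) (k : ℤ),
      dZ (y + k • xs) x * dZ xs xs - dZ (y + k • xs) xs * dZ xs x
        = dZ y x * dZ xs xs - dZ y xs * dZ xs x := by
    intro y k; simp only [dZ_add_smul]; ring
  -- the function computing the s-coefficient
  set sOf : (Fin 3 → ℤ) → ℝ := fun y =>
    ((dZ y x * dZ xs xs - dZ y xs * dZ xs x : ℤ) : ℝ) / ((dZ (crossZ xs x) (crossZ xs x) : ℤ) : ℝ)
    with hsOf
  -- part 1 point
  set y1 : Fin 3 → ℤ := y0 + (-(round (sOf y0))) • x with hy1def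
  have hdy1 : dZ (crossZ xs x) y1 = 1 := by rw [hy1def, hdZ_shift_x]; exact hy0
  have hshiftx : ∀ (y : Fin 3 → ℤ) (b : ℤ), sOf (y + b • x) = sOf y + (b : ℝ) := by
    intro y b
    rw [hsOf]
    simp only
    rw [hSnum_shift_x]
    push_cast
    rw [add_div, mul_div_assoc, div_self hNN, mul_one]
  have hshiftxs : ∀ (y : Fin 3 → ℤ) (k : ℤ), sOf (y + k • xs) = sOf y := by
    intro y k
    rw [hsOf]
    simp only
    rw [hSnum_shift_xs]
  have hs1val : sOf y1 = sOf y0 - round (sOf y0) := by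
    rw [hy1def, hshiftx]
    push_cast
    ring
  have hs1 : |sOf y1| ≤ 1 / 2 := by rw [hs1val]; exact abs_sub_round (sOf y0)
  have hdec := fun (y : Fin 3 → ℤ) (hy : dZ (crossZ xs x) y = 1) => decomp_real xs x y hn0 hy
  constructor
  · exact ⟨y1, _, sOf y1, hdet y1 hdy1, hdec y1 hdy1, hs1⟩
  -- part 2
  intro Y hY
  have hxs0 : xs ≠ 0 := by
    intro h
    apply hn0
    funext i; fin_cases i <;> simp [crossZ, h]
  have hx0 : x ≠ 0 := by
    intro h
    apply hn0
    funext i; fin_cases i <;> simp [crossZ, h]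
  have ha : 1 ≤ nrm (toR xs) := one_le_nrm_toR _ hxs0
  have hb : 1 ≤ nrm (toR x) := one_le_nrm_toR _ hx0
  have hY4 : 4 ≤ Y := by linarith
  -- the constant vector
  have hcle : nrm (H⁻¹ • (H⁻¹ • cross3 (toR xs) (toR x))) ≤ 1 := by
    have hHpos : (0:ℝ) < H := by linarith
    rw [nrm_smul, nrm_smul, ← hHdef, abs_of_nonneg (inv_nonneg.mpr hHpos.le),
      inv_mul_cancel₀ (ne_of_gt hHpos), mul_one]
    exact inv_le_one_of_one_le₀ hH1
  set r1 : ℝ := ((dZ y1 xs * dZ x x - dZ y1 x * dZ xs x : ℤ) : ℝ) /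
      ((dZ (crossZ xs x) (crossZ xs x) : ℤ) : ℝ) with hr1def
  have hdec1 : toR y1 = r1 • toR xs + sOf y1 • toR x +
      H⁻¹ • (H⁻¹ • cross3 (toR xs) (toR x)) := hdec y1 hdy1
  set k0 : ℤ := round (-r1) with hk0def
  have hFdec : ∀ k : ℤ, toR (y1 + k • xs) = (r1 + (k:ℝ)) • toR xs + sOf y1 • toR x +
      H⁻¹ • (H⁻¹ • cross3 (toR xs) (toR x)) := by
    intro k
    rw [toR_add_zsmul, hdec1]
    module
  have hk0abs : |r1 + (k0:ℝ)| ≤ 1/2 := by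
    have h := abs_sub_round (-r1)
    have he : r1 + (k0:ℝ) = -((-r1) - (round (-r1) : ℤ)) := by rw [hk0def]; ring
    rw [he, abs_neg]
    exact h
  have hgbound : ∀ k : ℤ, nrm (toR (y1 + k • xs)) ≤
      |r1 + (k:ℝ)| * nrm (toR xs) + |sOf y1| * nrm (toR x) + 1 := by
    intro k
    rw [hFdec k]
    calc nrm ((r1 + (k:ℝ)) • toR xs + sOf y1 • toR x + H⁻¹ • (H⁻¹ • cross3 (toR xs) (toR x)))
        ≤ nrm ((r1 + (k:ℝ)) • toR xs + sOf y1 • toR x)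
          + nrm (H⁻¹ • (H⁻¹ • cross3 (toR xs) (toR x))) := nrm_add_le _ _
      _ ≤ nrm ((r1 + (k:ℝ)) • toR xs) + nrm (sOf y1 • toR x) + 1 := by
          linarith [nrm_add_le ((r1 + (k:ℝ)) • toR xs) (sOf y1 • toR x)]
      _ = |r1 + (k:ℝ)| * nrm (toR xs) + |sOf y1| * nrm (toR x) + 1 := by
          rw [nrm_smul, nrm_smul]
  have hk0lt : nrm (toR (y1 + k0 • xs)) < Y := by
    have h := hgbound k0
    have t1 : |r1 + (k0:ℝ)| * nrm (toR xs) ≤ (1/2) * nrm (toR xs) :=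
      mul_le_mul_of_nonneg_right hk0abs (by linarith)
    have t2 : |sOf y1| * nrm (toR x) ≤ (1/2) * nrm (toR x) :=
      mul_le_mul_of_nonneg_right hs1 (by linarith)
    linarith
  -- existence of a large point
  have hex : ∃ m : ℕ, Y ≤ nrm (toR (y1 + (k0 + (m:ℤ)) • xs)) := by
    refine ⟨⌈Y + |(k0:ℝ)| + nrm (toR y1)⌉₊, ?_⟩
    set m : ℕ := ⌈Y + |(k0:ℝ)| + nrm (toR y1)⌉₊ with hmdef
    have hm : Y + |(k0:ℝ)| + nrm (toR y1) ≤ (m:ℝ) := Nat.le_ceil _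
    have h1 : nrm (((k0:ℝ) + (m:ℝ)) • toR xs) - nrm (toR y1)
        ≤ nrm (toR (y1 + (k0 + (m:ℤ)) • xs)) := by
      have he : toR (y1 + (k0 + (m:ℤ)) • xs)
          = ((k0:ℝ) + (m:ℝ)) • toR xs + toR y1 := by
        rw [toR_add_zsmul]
        push_cast
        module
      rw [he]
      exact nrm_sub_le _ _
    have h2 : (m:ℝ) - |(k0:ℝ)| ≤ |(k0:ℝ) + (m:ℝ)| := by
      have := abs_add_le ((k0:ℝ) + (m:ℝ)) (-(k0:ℝ))
      rw [show (k0:ℝ) + (m:ℝ) + -(k0:ℝ) = (m:ℝ) from by ring, abs_neg] at this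
      have hmn : |(m:ℝ)| = (m:ℝ) := abs_of_nonneg (Nat.cast_nonneg m)
      linarith
    have h3 : |(k0:ℝ) + (m:ℝ)| ≤ |(k0:ℝ) + (m:ℝ)| * nrm (toR xs) := by
      nlinarith [abs_nonneg ((k0:ℝ) + (m:ℝ))]
    have h4 : nrm (((k0:ℝ) + (m:ℝ)) • toR xs) = |(k0:ℝ) + (m:ℝ)| * nrm (toR xs) :=
      nrm_smul _ _
    linarith
  set m0 : ℕ := Nat.find hex with hm0def
  have hm0spec : Y ≤ nrm (toR (y1 + (k0 + (m0:ℤ)) • xs)) := Nat.find_spec hex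
  have hm0ne : m0 ≠ 0 := by
    intro h
    have he : y1 + (k0 + ((0:ℕ):ℤ)) • xs = y1 + k0 • xs := by
      funext i; simp
    rw [h, he] at hm0spec
    linarith
  have hprev : nrm (toR (y1 + (k0 + ((m0 - 1 : ℕ):ℤ)) • xs)) < Y := by
    have := Nat.find_min hex (m := m0 - 1) (by omega)
    push_neg at this
    exact this
  have hstep : nrm (toR (y1 + (k0 + (m0:ℤ)) • xs)) ≤
      nrm (toR (y1 + (k0 + ((m0 - 1 : ℕ):ℤ)) • xs)) + nrm (toR xs) := by
    have hcast : (m0:ℤ) = ((m0 - 1 : ℕ):ℤ) + 1 := by omega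
    have he : y1 + (k0 + (m0:ℤ)) • xs = (y1 + (k0 + ((m0 - 1 : ℕ):ℤ)) • xs) + (1:ℤ) • xs := by
      funext i
      simp only [Pi.add_apply, Pi.smul_apply, smul_eq_mul]
      linear_combination (xs i) * hcast
    rw [he, toR_add_zsmul]
    have h := nrm_add_le (toR (y1 + (k0 + ((m0 - 1 : ℕ):ℤ)) • xs)) (((1:ℤ):ℝ) • toR xs)
    simpa using h
  have hupper : nrm (toR (y1 + (k0 + (m0:ℤ)) • xs)) ≤ 2 * Y := by linarith
  refine ⟨y1 + (k0 + (m0:ℤ)) • xs, _, sOf (y1 + (k0 + (m0:ℤ)) • xs),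
    hdet _ (by rw [hdZ_shift_xs]; exact hdy1),
    hdec _ (by rw [hdZ_shift_xs]; exact hdy1), ?_, hm0spec, hupper⟩
  rw [hshiftxs]
  exact hs1
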